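/- For every integer n ≥ 1, B_{2n} = (1/(2^{2n} − 2)) · ∑_{l=1}^{n} (−1)^{l+1} · a(n,l) · C(2n+l, 2n)^{−1}. -/

import Mathlib

open PowerSeries Finset


/-- Riordan's coefficients `a(n,l)`: `a(0,0) = 1`, `a(n,0) = 0` for `n ≥ 1`, and for `l ≥ 1`,
`a(n,l) = ∑_{i=l−1}^{n−1} a(i,l−1) · C(2n+l−1, 2n−2i)`. -/
def a : ℕ → ℕ → ℚ
  | 0, 0 => 1
  | _ + 1, 0 => 0
  | n, l + 1 => ∑ i ∈ Finset.Ico l n, a i l * (Nat.choose (2 * n + l) (2 * n - 2 * i) : ℚ)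

lemma a_eq_zero {i l : ℕ} (h : i < l) : a i l = 0 := by
  match l, h with
  | l + 1, h =>
    simp only [a]
    rw [Finset.Ico_eq_empty (by omega), Finset.sum_empty]

lemma a_pos_zero {k : ℕ} (h : k ≠ 0) : a k 0 = 0 := by
  match k, h with
  | k + 1, _ => rfl

noncomputable def sh : PowerSeries ℚ := PowerSeries.mk fun k => if k % 2 = 1 then ((k.factorial : ℚ))⁻¹ else 0

noncomputable def u : PowerSeries ℚ := sh - PowerSeries.X

lemma coeff_sh (k : ℕ) : coeff (R := ℚ) k sh = if k % 2 = 1 then ((k.factorial : ℚ))⁻¹ else 0 := coeff_mk _ _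

lemma coeff_u (k : ℕ) : coeff (R := ℚ) k u = if k % 2 = 1 ∧ k ≠ 1 then ((k.factorial : ℚ))⁻¹ else 0 := by
  rw [u, map_sub, coeff_sh, coeff_X]
  rcases eq_or_ne k 1 with rfl | hk
  · norm_num
  · simp only [if_neg hk, sub_zero]
    congr 1
    simp [hk]

lemma coeff_w (k : ℕ) : coeff (R := ℚ) k (PowerSeries.derivative ℚ u) =
    if k % 2 = 0 ∧ k ≠ 0 then ((k.factorial : ℚ))⁻¹ else 0 := by
  rw [PowerSeries.coeff_derivative, coeff_u]
  rcases Nat.eq_zero_or_pos k with rfl | hk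
  · norm_num
  · have h1 : (k + 1) % 2 = 1 ∧ k + 1 ≠ 1 ↔ k % 2 = 0 ∧ k ≠ 0 := by omega
    rw [if_congr h1 rfl rfl]
    split
    · rw [Nat.factorial_succ]
      push_cast
      field_simp
    · simp

lemma coeff_u_pow (l : ℕ) : ∀ m, coeff (R := ℚ) m (u ^ l) =
    if m % 2 = l % 2 then a ((m - l) / 2) l * l.factorial / m.factorial else 0 := by
  induction l with
  | zero =>
    intro m
    rcases Nat.eq_zero_or_pos m with rfl | hm
    · simp [a]
    · rw [pow_zero, PowerSeries.coeff_one, if_neg (by omega)]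
      by_cases hp : m % 2 = 0
      · rw [if_pos hp, a_pos_zero (by omega), zero_mul, zero_div]
      · rw [if_neg hp]
  | succ l IH =>
    intro m
    match m with
    | 0 =>
      have h0 : constantCoeff (R := ℚ) u = 0 := by
        have := coeff_u 0
        simpa using this
      rw [coeff_zero_eq_constantCoeff, map_pow, h0, zero_pow (by omega)]
      by_cases hp : 0 % 2 = (l+1) % 2
      · rw [if_pos hp, Nat.zero_sub, Nat.zero_div, a_eq_zero (by omega), zero_mul, zero_div]
      · rw [if_neg hp]
    | m' + 1 =>
      have hder : coeff (R := ℚ) m' ((PowerSeries.derivative ℚ) (u ^ (l+1))) =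
          coeff (R := ℚ) (m'+1) (u^(l+1)) * (m'+1) := PowerSeries.coeff_derivative _ _
      rw [Derivation.leibniz_pow, Nat.add_sub_cancel, smul_eq_mul, map_nsmul,
        PowerSeries.coeff_mul,
        Finset.Nat.sum_antidiagonal_eq_sum_range_succ_mk] at hder
      set S : ℚ := ∑ j ∈ range (m'+1), coeff (R := ℚ) j (u^l) * coeff (R := ℚ) (m'-j) (PowerSeries.derivative ℚ u) with hS
      -- hder : (l+1) • S = coeff (m'+1) (u^(l+1)) * (m'+1)
      have hcoeff : coeff (R := ℚ) (m'+1) (u^(l+1)) = (l+1 : ℚ) * S / (m'+1 : ℚ) := by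
        rw [eq_div_iff (by positivity), ← hder, nsmul_eq_mul]
        push_cast
        ring
      by_cases hp : m' % 2 = l % 2
      · by_cases hml : m' < l
        · -- S = 0, result 0
          have hSz : S = 0 := by
            rw [hS]
            apply Finset.sum_eq_zero
            intro j hj
            rw [IH j, coeff_w]
            by_cases hjp : j % 2 = l % 2
            · have hjl : j < l := by
                have := Finset.mem_range.mp hj
                omega
              rw [if_pos hjp, show (j - l)/2 = 0 by omega, a_eq_zero (by omega),
                zero_mul, zero_div, zero_mul]
            · rw [if_neg hjp, zero_mul]
          rw [hcoeff, hSz, mul_zero, zero_div,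
            if_pos (show (m'+1) % 2 = (l+1) % 2 by omega),
            show (m'+1 - (l+1))/2 = 0 by omega, a_eq_zero (by omega), zero_mul, zero_div]
        · -- main case: l ≤ m', matching parity
          push_neg at hml
          obtain ⟨n, rfl⟩ : ∃ n, m' = 2*n + l := ⟨(m'-l)/2, by omega⟩
          have hinj : Set.InjOn (fun i => 2*i+l) (Ico l n) := fun i _ j _ h => by
            simpa using h
          have hsub : (Ico l n).image (fun i => 2*i+l) ⊆ range (2*n+l+1) := by
            intro j hj
            simp only [mem_image, mem_Ico] at hj
            obtain ⟨i, hi, rfl⟩ := hj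
            exact mem_range.mpr (by omega)
          have hzero : ∀ j ∈ range (2*n+l+1), j ∉ (Ico l n).image (fun i => 2*i+l) →
              coeff (R := ℚ) j (u^l) * coeff (R := ℚ) (2*n+l-j) (PowerSeries.derivative ℚ u) = 0 := by
            intro j hj hjim
            rw [IH j, coeff_w]
            by_cases hjp : j % 2 = l % 2
            · by_cases hjl : j < l
              · rw [if_pos hjp, show (j-l)/2 = 0 by omega, a_eq_zero (by omega),
                  zero_mul, zero_div, zero_mul]
              · push_neg at hjl
                by_cases hi0l : (j-l)/2 < l
                · rw [if_pos hjp, a_eq_zero hi0l, zero_mul, zero_div, zero_mul]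
                · have hi0n : n ≤ (j-l)/2 := by
                    by_contra hlt
                    exact hjim (mem_image.mpr ⟨(j-l)/2, mem_Ico.mpr ⟨by omega, by omega⟩,
                      by omega⟩)
                  have hjm := mem_range.mp hj
                  rw [if_pos hjp, if_neg (by omega), mul_zero]
            · rw [if_neg hjp, zero_mul]
          have hterm : ∀ i ∈ Ico l n,
              coeff (R := ℚ) (2*i+l) (u^l) * coeff (R := ℚ) (2*n+l-(2*i+l)) (PowerSeries.derivative ℚ u)
                = a i l * (Nat.choose (2*n+l) (2*n-2*i) : ℚ) * (l.factorial / (2*n+l).factorial) := by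
            intro i hi
            rw [mem_Ico] at hi
            rw [show 2*n+l-(2*i+l) = 2*n-2*i by omega, IH, coeff_w, if_pos (by omega),
              if_pos (by omega), show (2*i+l-l)/2 = i by omega]
            have hle : 2*n - 2*i ≤ 2*n + l := by omega
            have hfacN : (Nat.choose (2*n+l) (2*n-2*i)) * (2*n-2*i).factorial * (2*i+l).factorial
                = (2*n+l).factorial := by
              have h := Nat.choose_mul_factorial_mul_factorial hle
              rwa [show 2*n+l - (2*n-2*i) = 2*i+l by omega] at h
            have hfac : ((Nat.choose (2*n+l) (2*n-2*i)) * (2*n-2*i).factorial * (2*i+l).factorial : ℚ)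
                = ((2*n+l).factorial : ℚ) := by exact_mod_cast congrArg (Nat.cast : ℕ → ℚ) hfacN
            have h1 : ((2*i+l).factorial : ℚ) ≠ 0 := Nat.cast_ne_zero.mpr (Nat.factorial_ne_zero _)
            have h2 : ((2*n-2*i).factorial : ℚ) ≠ 0 := Nat.cast_ne_zero.mpr (Nat.factorial_ne_zero _)
            have h3 : ((2*n+l).factorial : ℚ) ≠ 0 := Nat.cast_ne_zero.mpr (Nat.factorial_ne_zero _)
            field_simp
            linear_combination (-(a i l)) * hfac
          have hSval : S = a n (l+1) * (l.factorial : ℚ) / (2*n+l).factorial := by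
            rw [hS, ← Finset.sum_subset hsub hzero, Finset.sum_image hinj,
              Finset.sum_congr rfl hterm, ← Finset.sum_mul]
            have ha : a n (l+1) = ∑ i ∈ Ico l n, a i l * (Nat.choose (2*n+l) (2*n-2*i) : ℚ) := by
              simp only [a]
            rw [ha, mul_div_assoc]
          rw [hcoeff, hSval, if_pos (by omega), show (2*n+l+1-(l+1))/2 = n by omega,
            Nat.factorial_succ (2*n+l), Nat.factorial_succ l]
          have h3 : ((2*n+l).factorial : ℚ) ≠ 0 := Nat.cast_ne_zero.mpr (Nat.factorial_ne_zero _)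
          push_cast
          field_simp
      · -- parity mismatch: S = 0 and RHS = 0
        have hSz : S = 0 := by
          rw [hS]
          apply Finset.sum_eq_zero
          intro j hj
          rw [IH j, coeff_w]
          have hjm : j ≤ m' := by
            have := Finset.mem_range.mp hj; omega
          by_cases hjp : j % 2 = l % 2
          · rw [if_pos hjp, if_neg (by omega), mul_zero]
          · rw [if_neg hjp, zero_mul]
        rw [hcoeff, hSz, mul_zero, zero_div, if_neg (by omega)]

lemma coeff_u_pow_at (l n : ℕ) :
    coeff (R := ℚ) (2*n+l) (u^l) = a n l * l.factorial / (2*n+l).factorial := by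
  rw [coeff_u_pow, if_pos (by omega), show (2*n+l-l)/2 = n by omega]

lemma coeff_u_pow_zero {l m : ℕ} (h : m < 3*l) : coeff (R := ℚ) m (u^l) = 0 := by
  rw [coeff_u_pow]
  split
  · rw [a_eq_zero (show (m-l)/2 < l by omega), zero_mul, zero_div]
  · rfl

noncomputable def Dser : PowerSeries ℚ :=
  PowerSeries.C (R := ℚ) 2 * bernoulliPowerSeries ℚ - rescale 2 (bernoulliPowerSeries ℚ)

lemma sh_eq : sh = PowerSeries.C (R := ℚ) 2⁻¹ * (exp ℚ - rescale (-1) (exp ℚ)) := by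
  ext k
  rw [coeff_sh, coeff_C_mul, map_sub, coeff_rescale, coeff_exp]
  simp only [Algebra.algebraMap_self, RingHom.id_apply]
  rcases Nat.even_or_odd k with he | ho
  · rw [if_neg (by rw [Nat.even_iff] at he; omega), he.neg_one_pow]
    ring
  · rw [if_pos (by rw [Nat.odd_iff] at ho; omega), ho.neg_one_pow]
    rw [one_div]
    ring

lemma shD : sh * Dser = X := by
  have hB := bernoulliPowerSeries_mul_exp_sub_one ℚ
  have hEF : exp ℚ * rescale (-1) (exp ℚ) = 1 := by
    have h := PowerSeries.exp_mul_exp_eq_exp_add (1:ℚ) (-1)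
    simpa using h
  have hB2 : rescale (2:ℚ) (bernoulliPowerSeries ℚ) * ((exp ℚ)^2 - 1) = PowerSeries.C (R := ℚ) 2 * X := by
    have h := congrArg (rescale (2:ℚ)) (bernoulliPowerSeries_mul_exp_sub_one ℚ)
    rw [map_mul, map_sub, map_one, rescale_X] at h
    rw [exp_pow_eq_rescale_exp]
    rw [show ((2:ℕ):ℚ) = (2:ℚ) by norm_num]
    exact h
  have hhalf : PowerSeries.C (R := ℚ) 2⁻¹ * PowerSeries.C (R := ℚ) 2 = 1 := by
    rw [← map_mul]
    norm_num
  rw [sh_eq, Dser]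
  set c := PowerSeries.C (R := ℚ) 2⁻¹
  set d := PowerSeries.C (R := ℚ) 2
  set E := exp ℚ
  set F := rescale (-1:ℚ) E
  set B := bernoulliPowerSeries ℚ
  set B2 := rescale (2:ℚ) B
  linear_combination (c*d*F*(E+1)) * hB - (c*F) * hB2 + (c*(-(d*B*E) + B2*E + d*X)) * hEF + X * hhalf

lemma coeff_Dser (k : ℕ) :
    coeff (R := ℚ) k Dser = (2 - (2:ℚ)^k) * bernoulli k / k.factorial := by
  rw [Dser, map_sub, coeff_C_mul, coeff_rescale, bernoulliPowerSeries, coeff_mk]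
  simp only [Algebra.algebraMap_self, RingHom.id_apply]
  ring

noncomputable def T (n : ℕ) : PowerSeries ℚ :=
  ∑ l ∈ Finset.Icc 1 n, PowerSeries.C (R := ℚ) ((-1:ℚ)^(l+1)) * (PowerSeries.X^(n-l) * u^l)

lemma sh_mul_T : ∀ n : ℕ, 1 ≤ n →
    sh * T n = X^n * u + PowerSeries.C (R := ℚ) ((-1:ℚ)^(n+1)) * u^(n+1) := by
  intro n
  induction n with
  | zero => omega
  | succ n IH =>
    intro _
    have hsh : sh = X + u := by rw [u]; ring
    rcases Nat.eq_zero_or_pos n with rfl | hn'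
    · rw [T, Finset.Icc_self, Finset.sum_singleton]
      norm_num
      rw [hsh]
      ring
    · have hc : PowerSeries.C (R := ℚ) ((-1:ℚ)^(n+1+1)) = - PowerSeries.C (R := ℚ) ((-1:ℚ)^(n+1)) := by
        rw [← map_neg]
        congr 1
        ring
      have hT : T (n+1) = X * T n + PowerSeries.C (R := ℚ) ((-1:ℚ)^(n+1+1)) * u^(n+1) := by
        rw [T, Finset.sum_Icc_succ_top (by omega), T, Finset.mul_sum]
        congr 1
        · apply Finset.sum_congr rfl
          intro l hl
          rw [Finset.mem_Icc] at hl
          rw [show n+1-l = (n-l)+1 by omega, pow_succ]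
          ring
        · rw [Nat.sub_self, pow_zero]
          ring
      rw [hT, hc]
      linear_combination X * (IH hn') - (PowerSeries.C (R := ℚ) ((-1:ℚ)^(n+1)) * u^(n+1)) * hsh

/-- For every integer `n ≥ 1`,
`B_{2n} = (1/(2^{2n} − 2)) · ∑_{l=1}^{n} (−1)^{l+1} · a(n,l) · C(2n+l, 2n)⁻¹`. -/
theorem bernoulli_eq_riordan_sum (n : ℕ) (hn : 1 ≤ n) :
    bernoulli (2 * n) =
      (1 / ((2 : ℚ) ^ (2 * n) - 2)) *
        ∑ l ∈ Finset.Icc 1 n,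
          (-1 : ℚ) ^ (l + 1) * a n l * ((Nat.choose (2 * n + l) (2 * n) : ℚ))⁻¹ := by
  have h4 : X * T n = X^n * (u * Dser)
      + PowerSeries.C (R := ℚ) ((-1:ℚ)^(n+1)) * (u^(n+1) * Dser) := by
    linear_combination Dser * (sh_mul_T n hn) - (T n) * shD
  have h5 : coeff (R := ℚ) (3*n) (T n) = ((2:ℚ)^(2*n) - 2) * bernoulli (2*n) / (2*n).factorial := by
    have hL : coeff (R := ℚ) (3*n+1) (X * T n) = coeff (R := ℚ) (3*n) (T n) := coeff_succ_X_mul _ _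
    have hR1 : coeff (R := ℚ) (3*n+1) (X^n * (u * Dser)) = coeff (R := ℚ) (2*n+1) (u * Dser) := by
      rw [show 3*n+1 = (2*n+1) + n by ring]
      exact coeff_X_pow_mul _ _ _
    have huD : u * Dser = X - X * Dser := by
      rw [u]
      linear_combination shD
    have hR1' : coeff (R := ℚ) (2*n+1) (u * Dser)
        = -((2 - (2:ℚ)^(2*n)) * bernoulli (2*n) / (2*n).factorial) := by
      rw [huD, map_sub, coeff_X, if_neg (by omega), coeff_succ_X_mul, coeff_Dser]
      ring
    have hR2 : coeff (R := ℚ) (3*n+1) (u^(n+1) * Dser) = 0 := by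
      rw [PowerSeries.coeff_mul]
      apply Finset.sum_eq_zero
      intro p hp
      rw [Finset.HasAntidiagonal.mem_antidiagonal] at hp
      rw [coeff_u_pow_zero (by omega), zero_mul]
    rw [← hL, h4, map_add, hR1, hR1', coeff_C_mul, hR2, mul_zero, add_zero]
    ring
  have h6 : coeff (R := ℚ) (3*n) (T n)
      = ∑ l ∈ Finset.Icc 1 n, (-1:ℚ)^(l+1) * (a n l * l.factorial / (2*n+l).factorial) := by
    rw [T, map_sum]
    apply Finset.sum_congr rfl
    intro l hl
    rw [Finset.mem_Icc] at hl
    rw [coeff_C_mul, show 3*n = (2*n+l) + (n-l) by omega, coeff_X_pow_mul, coeff_u_pow_at]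
  have hnz : ((2:ℚ)^(2*n) - 2) ≠ 0 := by
    have h4le : (2:ℚ)^2 ≤ (2:ℚ)^(2*n) := pow_le_pow_right₀ (by norm_num) (by omega)
    norm_num at h4le
    intro hzero
    nlinarith
  have hfacnz : (((2*n).factorial : ℚ)) ≠ 0 := Nat.cast_ne_zero.mpr (Nat.factorial_ne_zero _)
  have hterm : ∀ l ∈ Finset.Icc 1 n,
      (-1:ℚ)^(l+1) * a n l * ((Nat.choose (2*n+l) (2*n) : ℚ))⁻¹
      = ((2*n).factorial : ℚ) * ((-1:ℚ)^(l+1) * (a n l * l.factorial / (2*n+l).factorial)) := by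
    intro l hl
    have hle : 2*n ≤ 2*n+l := by omega
    have hfacN : (Nat.choose (2*n+l) (2*n)) * (2*n).factorial * l.factorial
        = (2*n+l).factorial := by
      have h := Nat.choose_mul_factorial_mul_factorial hle
      rwa [show 2*n+l-2*n = l by omega] at h
    have hfac : ((Nat.choose (2*n+l) (2*n)) * (2*n).factorial * l.factorial : ℚ)
        = ((2*n+l).factorial : ℚ) := by exact_mod_cast congrArg (Nat.cast : ℕ → ℚ) hfacN
    have h1 : ((l.factorial : ℚ)) ≠ 0 := Nat.cast_ne_zero.mpr (Nat.factorial_ne_zero _)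
    have h2 : (((2*n+l).factorial : ℚ)) ≠ 0 := Nat.cast_ne_zero.mpr (Nat.factorial_ne_zero _)
    have h3 : ((Nat.choose (2*n+l) (2*n) : ℚ)) ≠ 0 := by
      have := Nat.choose_pos hle
      positivity
    field_simp
    linear_combination (-(a n l)) * hfac
  rw [Finset.sum_congr rfl hterm, ← Finset.mul_sum, ← h6, h5]
  field_simp
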